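/- arXiv:1705.02276 — 4 statements merged into one kernel-verified Lean document; each statement's English description precedes it below -/
import Mathlib

section
/- Let M and N be n×n positive semi-definite real symmetric matrices such that 0 ≤ M ≤ N⁻¹ in the Loewner order (in particular N is invertible). Then det(Id − MN) ≥ 1 − Tr(MN). -/
open Matrix Finset

private lemma weier {ι : Type*} (s : Finset ι) (f : ι → ℝ) (h0 : ∀ i ∈ s, 0 ≤ f i)
    (h1 : ∀ i ∈ s, f i ≤ 1) : 1 - ∑ i ∈ s, f i ≤ ∏ i ∈ s, (1 - f i) := by
  classical
  induction s using Finset.induction with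
  | empty => simp
  | @insert a s hx ih =>
    rw [Finset.sum_insert hx, Finset.prod_insert hx]
    have h0a := h0 a (Finset.mem_insert_self a s)
    have h1a := h1 a (Finset.mem_insert_self a s)
    have ihs := ih (fun i hi => h0 i (Finset.mem_insert_of_mem hi))
      (fun i hi => h1 i (Finset.mem_insert_of_mem hi))
    have hs : 0 ≤ ∑ i ∈ s, f i :=
      Finset.sum_nonneg (fun i hi => h0 i (Finset.mem_insert_of_mem hi))
    nlinarith [mul_le_mul_of_nonneg_left ihs (by linarith : (0:ℝ) ≤ 1 - f a)]

private lemma diag_nonneg_of_psd {m : ℕ} {B : Matrix (Fin m) (Fin m) ℝ}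
    (hB : B.PosSemidef) (i : Fin m) : 0 ≤ B i i := by
  have := hB.dotProduct_mulVec_nonneg (Pi.single i 1)
  simpa [Matrix.mulVec_single, dotProduct, Pi.single_apply] using this

/-- If `M, N` are PSD with `0 ≤ M ≤ N⁻¹` in the Loewner order and `N` invertible,
then `det(Id − MN) ≥ 1 − Tr(MN)`. -/
theorem stmt4 {n : ℕ} (M N : Matrix (Fin n) (Fin n) ℝ)
    (hM : M.PosSemidef) (hN : N.PosSemidef) (hNinv : IsUnit N.det)
    (hle : (N⁻¹ - M).PosSemidef) :
    1 - (M * N).trace ≤ (1 - M * N).det := by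
  classical
  open scoped MatrixOrder in set S := CFC.sqrt N with hSdef
  have hS : S * S = N := by open scoped MatrixOrder in exact CFC.sqrt_mul_sqrt_self N hN.nonneg
  have hSH : Sᴴ = S := by
    open scoped MatrixOrder in exact (CFC.sqrt_nonneg N).posSemidef.isHermitian
  have hSdet : IsUnit S.det := by
    have h := hNinv
    rw [← hS, det_mul] at h
    exact isUnit_of_mul_isUnit_left h
  have hA : (S * M * S).PosSemidef := by
    have := hM.mul_mul_conjTranspose_same S
    rwa [hSH] at this
  have hSinv : S * N⁻¹ * S = 1 := by
    rw [← hS, Matrix.mul_inv_rev, ← Matrix.mul_assoc,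
      Matrix.mul_nonsing_inv _ hSdet, one_mul, Matrix.nonsing_inv_mul _ hSdet]
  have hone : (1 - S * M * S).PosSemidef := by
    have h2 := hle.mul_mul_conjTranspose_same S
    rw [hSH] at h2
    have he : S * (N⁻¹ - M) * S = 1 - S * M * S := by
      rw [mul_sub, sub_mul, hSinv]
    rwa [he] at h2
  have hdet : (1 - M * N).det = (1 - S * M * S).det := by
    rw [← hS, ← mul_assoc, det_one_sub_mul_comm, ← mul_assoc]
  have htr : (M * N).trace = (S * M * S).trace := by
    rw [← hS, ← mul_assoc, trace_mul_comm, ← mul_assoc]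
  rw [hdet, htr]
  set A := S * M * S with hAdef
  have hAH : A.IsHermitian := hA.isHermitian
  set U : Matrix (Fin n) (Fin n) ℝ := (hAH.eigenvectorUnitary : Matrix (Fin n) (Fin n) ℝ)
    with hUdef
  have hUU : star U * U = 1 := Unitary.coe_star_mul_self hAH.eigenvectorUnitary
  have hd : star U * A * U = diagonal (RCLike.ofReal ∘ hAH.eigenvalues) :=
    by have := hAH.conjStarAlgAut_star_eigenvectorUnitary
       rwa [Unitary.conjStarAlgAut_star_apply] at this
  have h1d : star U * (1 - A) * U = 1 - diagonal (RCLike.ofReal ∘ hAH.eigenvalues) := by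
    rw [mul_sub, sub_mul, mul_one, hUU, hd]
  have hpsdD : Matrix.PosSemidef
      ((1 : Matrix (Fin n) (Fin n) ℝ) - diagonal (RCLike.ofReal ∘ hAH.eigenvalues)) := by
    rw [← h1d]
    have := hone.conjTranspose_mul_mul_same U
    rwa [← Matrix.star_eq_conjTranspose] at this
  have hub : ∀ i, hAH.eigenvalues i ≤ 1 := by
    intro i
    have := diag_nonneg_of_psd hpsdD i
    simp only [Matrix.sub_apply, Matrix.one_apply_eq, Matrix.diagonal_apply_eq,
      Function.comp_apply, RCLike.ofReal_real_eq_id, id_eq] at this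
    linarith
  have hnn : ∀ i, 0 ≤ hAH.eigenvalues i := hA.eigenvalues_nonneg
  -- determinant
  have hdet2 : (1 - A).det = ∏ i, (1 - hAH.eigenvalues i) := by
    have hdc := congrArg det h1d
    rw [det_mul, det_mul, mul_right_comm, ← det_mul, hUU, det_one, one_mul] at hdc
    rw [hdc]
    have h : (1 : Matrix (Fin n) (Fin n) ℝ) - diagonal (RCLike.ofReal ∘ hAH.eigenvalues)
        = diagonal (fun i => 1 - hAH.eigenvalues i) := by
      rw [← diagonal_one, diagonal_sub]
      congr 1
    rw [h, det_diagonal]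
  -- trace
  have htr2 : A.trace = ∑ i, hAH.eigenvalues i := by
    conv_lhs => rw [hAH.spectral_theorem]
    rw [Unitary.conjStarAlgAut_apply, trace_mul_cycle, ← hUdef, hUU, one_mul, trace_diagonal]
    simp
  rw [hdet2, htr2]
  exact weier Finset.univ _ (fun i _ => hnn i) (fun i _ => hub i)
end

section
/- Let M be an n×n positive semi-definite real symmetric matrix written in block form M = [[M₁, N],[Nᵀ, M₂]] where M₁ is k×k, M₂ is (n−k)×(n−k) and N is k×(n−k). Then 0 ≤ det(M₁)det(M₂) − det(M) ≤ k(n−k)·Tr(NᵀN)·‖M‖_∞^{n−2}, where ‖M‖_∞ := max_{i,j} |M_{i,j}|. -/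
open Matrix Finset

namespace Stmt5Aux

variable {n : Type*} [Fintype n] [DecidableEq n]

lemma weierstrass {ι : Type*} (s : Finset ι) (μ : ι → ℝ) (h0 : ∀ i ∈ s, 0 ≤ μ i)
    (h1 : ∀ i ∈ s, μ i ≤ 1) :
    (1 : ℝ) - ∑ i ∈ s, μ i ≤ ∏ i ∈ s, (1 - μ i) ∧ ∏ i ∈ s, (1 - μ i) ≤ 1 := by
  classical
  induction s using Finset.cons_induction with
  | empty => simp
  | cons a s ha ih =>
    obtain ⟨ih1, ih2⟩ := ih (fun i hi => h0 i (Finset.mem_cons_of_mem hi))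
      (fun i hi => h1 i (Finset.mem_cons_of_mem hi))
    have hP0 : (0:ℝ) ≤ ∏ i ∈ s, (1 - μ i) :=
      Finset.prod_nonneg fun i hi => by linarith [h1 i (Finset.mem_cons_of_mem hi)]
    have ha0 : 0 ≤ μ a := h0 a (Finset.mem_cons_self _ _)
    have ha1 : μ a ≤ 1 := h1 a (Finset.mem_cons_self _ _)
    rw [Finset.prod_cons, Finset.sum_cons]
    constructor
    · nlinarith
    · nlinarith

lemma trace_eq_sum_eigenvalues {A : Matrix n n ℝ} (hA : A.IsHermitian) :
    A.trace = ∑ i, hA.eigenvalues i := by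
  conv_lhs => rw [hA.spectral_theorem, Unitary.conjStarAlgAut_apply]
  rw [trace_mul_cycle]
  have hU : (star (hA.eigenvectorUnitary : Matrix n n ℝ)) * (hA.eigenvectorUnitary : Matrix n n ℝ)
      = 1 := by
    exact (Matrix.mem_unitaryGroup_iff').mp (hA.eigenvectorUnitary).2
  rw [hU, Matrix.one_mul, trace_diagonal]
  simp


lemma diag_nonneg {A : Matrix n n ℝ} (hA : A.PosSemidef) (i : n) : 0 ≤ A i i := by
  have := hA.dotProduct_mulVec_nonneg (Pi.single i 1)
  simpa [mulVec_single, dotProduct_single] using this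

lemma trace_nonneg {A : Matrix n n ℝ} (hA : A.PosSemidef) : 0 ≤ A.trace :=
  Finset.sum_nonneg fun i _ => diag_nonneg hA i

lemma amgm {ι : Type*} [Fintype ι] [Nonempty ι] (μ : ι → ℝ) (h0 : ∀ i, 0 ≤ μ i) {c : ℝ}
    (hsum : ∑ i, μ i ≤ (Fintype.card ι) * c) : ∏ i, μ i ≤ c ^ (Fintype.card ι) := by
  set m : ℕ := Fintype.card ι with hmdef
  have hm : m ≠ 0 := Fintype.card_ne_zero
  have hc : 0 ≤ c := by
    have : (0:ℝ) ≤ ∑ i, μ i := Finset.sum_nonneg fun i _ => h0 i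
    have hm' : (0:ℝ) < m := by exact_mod_cast Nat.pos_of_ne_zero hm
    nlinarith
  rcases eq_or_lt_of_le hc with hc0 | hcpos
  · have hμ : ∀ i ∈ Finset.univ, μ i = 0 := by
      have hsum0 : ∑ i, μ i ≤ 0 := by rw [← hc0] at hsum; simpa using hsum
      intro i _
      have h1 : ∑ i, μ i = 0 := le_antisymm hsum0 (Finset.sum_nonneg fun i _ => h0 i)
      exact (Finset.sum_eq_zero_iff_of_nonneg (fun i _ => h0 i)).mp h1 i (Finset.mem_univ i)
    have : ∏ i, μ i = 0 := by
      apply Finset.prod_eq_zero (Finset.mem_univ (Classical.arbitrary ι))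
      exact hμ _ (Finset.mem_univ _)
    rw [this, ← hc0]
    simp [zero_pow hm]
  · have hm' : (0:ℝ) < m := by exact_mod_cast Nat.pos_of_ne_zero hm
    have key := Real.geom_mean_le_arith_mean_weighted Finset.univ (fun _ => (m : ℝ)⁻¹) μ
      (fun i _ => by positivity) (by simp [Finset.card_univ, ← hmdef, mul_inv_cancel₀ hm'.ne']) (fun i _ => h0 i)
    have hle : ∏ i, μ i ^ ((m:ℝ)⁻¹) ≤ c := by
      refine key.trans ?_
      rw [← Finset.mul_sum] at *
      rw [inv_mul_le_iff₀ hm']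
      linarith
    have hprodnn : 0 ≤ ∏ i, μ i ^ ((m:ℝ)⁻¹) := Finset.prod_nonneg fun i _ => Real.rpow_nonneg (h0 i) _
    have := pow_le_pow_left₀ hprodnn hle m
    calc ∏ i, μ i = (∏ i, μ i ^ ((m:ℝ)⁻¹)) ^ m := by
          rw [← Finset.prod_pow]
          refine Finset.prod_congr rfl fun i _ => ?_
          rw [← Real.rpow_natCast (μ i ^ ((m:ℝ)⁻¹)) m, ← Real.rpow_mul (h0 i),
            inv_mul_cancel₀ hm'.ne', Real.rpow_one]
      _ ≤ c ^ m := this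




lemma det_le_pow {A : Matrix n n ℝ} (hA : A.PosSemidef) {c : ℝ} (hc : 0 ≤ c)
    (hd : ∀ i, A i i ≤ c) : A.det ≤ c ^ (Fintype.card n) := by
  cases isEmpty_or_nonempty n with
  | inl h => simp [Matrix.det_isEmpty]
  | inr h =>
    rw [hA.1.det_eq_prod_eigenvalues]
    have htr : ∑ i, hA.1.eigenvalues i ≤ (Fintype.card n) * c := by
      rw [← trace_eq_sum_eigenvalues hA.1]
      calc A.trace = ∑ i, A i i := rfl
        _ ≤ ∑ _i : n, c := Finset.sum_le_sum fun i _ => hd i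
        _ = (Fintype.card n) * c := by simp [Finset.sum_const, nsmul_eq_mul]
    simpa using amgm hA.1.eigenvalues (fun i => hA.eigenvalues_nonneg i) htr


example (f : ℕ → ℝ) : (RCLike.ofReal ∘ f) = f := by simp

lemma det_one_sub_bounds {T : Matrix n n ℝ} (hT : T.PosSemidef) (h1 : ((1 : Matrix n n ℝ) - T).PosSemidef) :
    1 - T.trace ≤ ((1 : Matrix n n ℝ) - T).det ∧ ((1 : Matrix n n ℝ) - T).det ≤ 1 := by
  set U : Matrix n n ℝ := (hT.1.eigenvectorUnitary : Matrix n n ℝ) with hUdef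
  set μ := hT.1.eigenvalues with hμdef
  have hspec : T = U * diagonal μ * Uᴴ := by
    have := hT.1.spectral_theorem
    rw [Unitary.conjStarAlgAut_apply] at this
    exact this
  have hU1 : U * Uᴴ = 1 := mem_unitaryGroup_iff.mp hT.1.eigenvectorUnitary.2
  have hU2 : Uᴴ * U = 1 := mem_unitaryGroup_iff'.mp hT.1.eigenvectorUnitary.2
  have hone : (1 : Matrix n n ℝ) - T = U * (diagonal (fun i => 1 - μ i)) * Uᴴ := by
    have : (diagonal (fun i => 1 - μ i) : Matrix n n ℝ) = 1 - diagonal μ := by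
      rw [← diagonal_one, diagonal_sub]
    rw [this, Matrix.mul_sub, Matrix.mul_one, Matrix.sub_mul, hU1, ← hspec]
  have hdet : ((1 : Matrix n n ℝ) - T).det = ∏ i, (1 - μ i) := by
    rw [hone, det_mul_right_comm, hU1, Matrix.one_mul, det_diagonal]
  have htr : T.trace = ∑ i, μ i := trace_eq_sum_eigenvalues hT.1
  have hD : (diagonal (fun i => 1 - μ i) : Matrix n n ℝ) = Uᴴ * ((1 : Matrix n n ℝ) - T) * U := by
    rw [hone, ← Matrix.mul_assoc, ← Matrix.mul_assoc, hU2, Matrix.one_mul, Matrix.mul_assoc, hU2,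
      Matrix.mul_one]
  have hμ1 : ∀ i, μ i ≤ 1 := by
    intro i
    have hpsd : (Uᴴ * ((1 : Matrix n n ℝ) - T) * U).PosSemidef := by
      have := h1.mul_mul_conjTranspose_same Uᴴ
      simpa using this
    have := diag_nonneg (hD ▸ hpsd) i
    simp only [diagonal_apply_eq] at this
    linarith
  have hμ0 : ∀ i, 0 ≤ μ i := fun i => hT.eigenvalues_nonneg i
  obtain ⟨w1, w2⟩ := weierstrass Finset.univ μ (fun i _ => hμ0 i) (fun i _ => hμ1 i)
  rw [hdet, htr]
  exact ⟨w1, w2⟩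


lemma smul_one_sub_psd {A : Matrix n n ℝ} (hA : A.PosSemidef) :
    ((A.trace • 1 : Matrix n n ℝ) - A).PosSemidef := by
  set U : Matrix n n ℝ := (hA.1.eigenvectorUnitary : Matrix n n ℝ) with hUdef
  set μ := hA.1.eigenvalues with hμdef
  have hspec : A = U * diagonal μ * Uᴴ := by
    have := hA.1.spectral_theorem
    rw [Unitary.conjStarAlgAut_apply] at this
    exact this
  have hU1 : U * Uᴴ = 1 := mem_unitaryGroup_iff.mp hA.1.eigenvectorUnitary.2
  have htr : A.trace = ∑ i, μ i := trace_eq_sum_eigenvalues hA.1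
  have hone : (A.trace • 1 : Matrix n n ℝ) - A
      = U * (diagonal (fun i => A.trace - μ i)) * Uᴴ := by
    have hd : (diagonal (fun i => A.trace - μ i) : Matrix n n ℝ)
        = A.trace • 1 - diagonal μ := by
      rw [← diagonal_one, ← diagonal_smul, diagonal_sub]
      congr 1
      funext i
      simp
    rw [hd, Matrix.mul_sub, Matrix.sub_mul, Matrix.mul_smul, Matrix.mul_one, Matrix.smul_mul,
      hU1, ← hspec]
  rw [hone]
  have hdiag : (diagonal (fun i => A.trace - μ i) : Matrix n n ℝ).PosSemidef := by
    rw [posSemidef_diagonal_iff]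
    intro i
    rw [htr]
    have : μ i ≤ ∑ j, μ j :=
      Finset.single_le_sum (fun j _ => hA.eigenvalues_nonneg j) (Finset.mem_univ i)
    linarith
  exact hdiag.mul_mul_conjTranspose_same U

open scoped MatrixOrder in
lemma trace_mul_nonneg {A B : Matrix n n ℝ} (hA : A.PosSemidef) (hB : B.PosSemidef) :
    0 ≤ (A * B).trace := by
  set R := CFC.sqrt A with hR
  have hRR : R * R = A := CFC.sqrt_mul_sqrt_self A hA.nonneg
  have hRH : Rᴴ = R := (CFC.sqrt_nonneg A).posSemidef.1
  have key : (R * B * Rᴴ).PosSemidef := hB.mul_mul_conjTranspose_same R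
  rw [hRH] at key
  have heq : (A * B).trace = (R * B * R).trace := by
    rw [← hRR, Matrix.mul_assoc, trace_mul_comm]
  rw [heq]
  exact trace_nonneg key

lemma trace_mul_le {A B : Matrix n n ℝ} (hB : B.PosSemidef) {α : ℝ}
    (hle : ((α • 1 : Matrix n n ℝ) - A).PosSemidef) :
    (A * B).trace ≤ α * B.trace := by
  have h := trace_mul_nonneg hle hB
  rw [Matrix.sub_mul, trace_sub, Matrix.smul_mul, Matrix.one_mul, trace_smul] at h
  simp only [smul_eq_mul] at h
  linarith


open scoped MatrixOrder in
lemma det_sub_det_bounds {A S : Matrix n n ℝ} (hA : A.PosDef) (hS : S.PosSemidef)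
    (hAS : (A - S).PosSemidef) :
    0 ≤ A.det - (A - S).det ∧ A.det - (A - S).det ≤ (adjugate A * S).trace := by
  have hRR : CFC.sqrt A * CFC.sqrt A = A := CFC.sqrt_mul_sqrt_self A hA.posSemidef.nonneg
  set R := CFC.sqrt A with hRdef
  clear_value R
  have hRH : Rᴴ = R := hRdef ▸ (CFC.sqrt_nonneg A).posSemidef.1
  have hdetA : 0 < A.det := hA.det_pos
  have hdetR : IsUnit R.det := by
    have h2 : R.det * R.det = A.det := by rw [← det_mul, hRR]
    apply isUnit_iff_ne_zero.mpr
    intro h0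
    rw [h0, mul_zero] at h2
    exact hdetA.ne h2
  have hRinv : R * R⁻¹ = 1 := mul_nonsing_inv R hdetR
  have hRinv' : R⁻¹ * R = 1 := nonsing_inv_mul R hdetR
  have hRiH : (R⁻¹)ᴴ = R⁻¹ := by rw [conjTranspose_nonsing_inv, hRH]
  have hT : (R⁻¹ * S * R⁻¹).PosSemidef := by
    have := hS.mul_mul_conjTranspose_same R⁻¹
    rwa [hRiH] at this
  have e1 : R⁻¹ * A * R⁻¹ = 1 := by
    rw [← hRR, ← Matrix.mul_assoc, hRinv', Matrix.one_mul, hRinv]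
  have h1T : (1 : Matrix n n ℝ) - R⁻¹ * S * R⁻¹ = R⁻¹ * (A - S) * R⁻¹ := by
    rw [Matrix.mul_sub, Matrix.sub_mul, e1]
  have h1Tpsd : ((1 : Matrix n n ℝ) - R⁻¹ * S * R⁻¹).PosSemidef := by
    rw [h1T]
    have := hAS.mul_mul_conjTranspose_same R⁻¹
    rwa [hRiH] at this
  have e2 : R * (R⁻¹ * S * R⁻¹) * R = S := by
    simp only [Matrix.mul_assoc, hRinv', Matrix.mul_one]
    rw [← Matrix.mul_assoc, hRinv, Matrix.one_mul]
  have hASeq : A - S = R * ((1 : Matrix n n ℝ) - R⁻¹ * S * R⁻¹) * R := by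
    rw [Matrix.mul_sub, Matrix.mul_one, Matrix.sub_mul, hRR, e2]
  have hdetAS : (A - S).det = A.det * ((1 : Matrix n n ℝ) - R⁻¹ * S * R⁻¹).det := by
    rw [hASeq, det_mul_right_comm, det_mul, det_mul, ← det_mul, hRR]
  obtain ⟨g1, g2⟩ := det_one_sub_bounds hT h1Tpsd
  have htrT : (adjugate A * S).trace = A.det * (R⁻¹ * S * R⁻¹).trace := by
    have hAinv : A⁻¹ = R⁻¹ * R⁻¹ := by rw [← hRR, Matrix.mul_inv_rev]
    have hadj : adjugate A = A.det • A⁻¹ := by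
      rw [Matrix.inv_def, Ring.inverse_eq_inv', smul_smul, mul_inv_cancel₀ hdetA.ne',
        one_smul]
    rw [hadj, Matrix.smul_mul, trace_smul, smul_eq_mul, hAinv]
    congr 1
    rw [Matrix.mul_assoc R⁻¹ R⁻¹ S, trace_mul_comm]
  constructor
  · rw [hdetAS]
    nlinarith
  · rw [hdetAS, htrT]
    have htrTnn : 0 ≤ (R⁻¹ * S * R⁻¹).trace := trace_nonneg hT
    nlinarith


lemma adjugate_eq_det_smul_inv {A : Matrix n n ℝ} (h : A.det ≠ 0) :
    adjugate A = A.det • A⁻¹ := by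
  rw [Matrix.inv_def, Ring.inverse_eq_inv', smul_smul, mul_inv_cancel₀ h, one_smul]

lemma adjugate_posSemidef {A : Matrix n n ℝ} (hA : A.PosDef) :
    (adjugate A).PosSemidef := by
  rw [adjugate_eq_det_smul_inv hA.det_pos.ne']
  have h := hA.inv.posSemidef
  refine PosSemidef.of_dotProduct_mulVec_nonneg ?_ ?_
  · show (A.det • A⁻¹)ᴴ = A.det • A⁻¹
    rw [conjTranspose_smul, h.1.eq]
    norm_num
  · intro x
    have := h.dotProduct_mulVec_nonneg x
    rw [smul_mulVec, dotProduct_smul]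
    exact smul_nonneg hA.det_pos.le this

lemma trace_adjugate_le {m : ℕ} {A : Matrix (Fin (m+1)) (Fin (m+1)) ℝ} (hA : A.PosSemidef)
    {c : ℝ} (hc : 0 ≤ c) (hd : ∀ i, A i i ≤ c) :
    (adjugate A).trace ≤ (m+1) * c ^ m := by
  have hdiag : ∀ i : Fin (m+1), adjugate A i i ≤ c ^ m := by
    intro i
    rw [adjugate_fin_succ_eq_det_submatrix]
    have hsub : (A.submatrix i.succAbove i.succAbove).PosSemidef := hA.submatrix _
    have := det_le_pow hsub hc (fun p => hd _)
    simp only [Fintype.card_fin] at this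
    have hsign : ((-1 : ℝ)) ^ ((i : ℕ) + (i : ℕ)) = 1 := Even.neg_one_pow ⟨i, rfl⟩
    rw [hsign, one_mul]
    exact this
  calc (adjugate A).trace = ∑ i, adjugate A i i := rfl
    _ ≤ ∑ _i : Fin (m+1), c ^ m := Finset.sum_le_sum fun i _ => hdiag i
    _ = (m+1) * c ^ m := by simp [Finset.sum_const, nsmul_eq_mul]


lemma main_pd {k l : ℕ} (M₁ : Matrix (Fin (k+1)) (Fin (k+1)) ℝ)
    (M₂ : Matrix (Fin (l+1)) (Fin (l+1)) ℝ) (N : Matrix (Fin (k+1)) (Fin (l+1)) ℝ)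
    (h : (fromBlocks M₁ N Nᵀ M₂).PosSemidef) (h1 : M₁.PosDef) (h2 : M₂.PosDef)
    {c : ℝ} (hc : 0 ≤ c) (hd1 : ∀ i, M₁ i i ≤ c) (hd2 : ∀ i, M₂ i i ≤ c) :
    0 ≤ M₁.det * M₂.det - (fromBlocks M₁ N Nᵀ M₂).det ∧
    M₁.det * M₂.det - (fromBlocks M₁ N Nᵀ M₂).det
      ≤ ((k:ℝ)+1) * ((l:ℝ)+1) * (Nᵀ * N).trace * c ^ (k + l) := by
  haveI : Invertible M₂ := M₂.invertibleOfIsUnitDet (isUnit_iff_ne_zero.mpr h2.det_pos.ne')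
  have hNt : Nᵀ = Nᴴ := (conjTranspose_eq_transpose_of_trivial N).symm
  have hdet : (fromBlocks M₁ N Nᵀ M₂).det = M₂.det * (M₁ - N * M₂⁻¹ * Nᵀ).det := by
    rw [det_fromBlocks₂₂, invOf_eq_nonsing_inv]
  have hSchur : (M₁ - N * M₂⁻¹ * Nᵀ).PosSemidef := by
    rw [hNt]
    refine (PosDef.fromBlocks₂₂ M₁ N h2).mp ?_
    rw [← hNt]
    exact h
  have hS : (N * M₂⁻¹ * Nᵀ).PosSemidef := by
    rw [hNt]
    exact (h2.inv.posSemidef).mul_mul_conjTranspose_same N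
  obtain ⟨f1, f2⟩ := det_sub_det_bounds h1 hS hSchur
  have hgap : M₁.det * M₂.det - (fromBlocks M₁ N Nᵀ M₂).det
      = M₂.det * (M₁.det - (M₁ - N * M₂⁻¹ * Nᵀ).det) := by
    rw [hdet]; ring
  have hdet2 : 0 < M₂.det := h2.det_pos
  constructor
  · rw [hgap]
    positivity
  · -- upper bound
    have step1 : M₁.det * M₂.det - (fromBlocks M₁ N Nᵀ M₂).det
        ≤ M₂.det * (adjugate M₁ * (N * M₂⁻¹ * Nᵀ)).trace := by
      rw [hgap]
      exact mul_le_mul_of_nonneg_left f2 hdet2.le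
    have step2 : M₂.det * (adjugate M₁ * (N * M₂⁻¹ * Nᵀ)).trace
        = (adjugate M₁ * (N * adjugate M₂ * Nᵀ)).trace := by
      rw [adjugate_eq_det_smul_inv h2.det_pos.ne', Matrix.mul_smul, Matrix.smul_mul,
        Matrix.mul_smul, trace_smul, smul_eq_mul]
    have hW : (N * adjugate M₂ * Nᵀ).PosSemidef := by
      rw [hNt]
      exact (adjugate_posSemidef h2).mul_mul_conjTranspose_same N
    have hNN : (Nᵀ * N).PosSemidef := by
      rw [hNt]
      exact posSemidef_conjTranspose_mul_self N
    have hadj1 := adjugate_posSemidef h1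
    have hadj2 := adjugate_posSemidef h2
    have hα : (adjugate M₁).trace ≤ ((k:ℝ)+1) * c ^ k := by
      have := trace_adjugate_le h1.posSemidef hc hd1
      push_cast at this ⊢
      exact this
    have hβ : (adjugate M₂).trace ≤ ((l:ℝ)+1) * c ^ l := by
      have := trace_adjugate_le h2.posSemidef hc hd2
      push_cast at this ⊢
      exact this
    have hα0 : 0 ≤ (adjugate M₁).trace := trace_nonneg hadj1
    have hβ0 : 0 ≤ (adjugate M₂).trace := trace_nonneg hadj2
    have step3 : (adjugate M₁ * (N * adjugate M₂ * Nᵀ)).trace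
        ≤ (adjugate M₁).trace * (N * adjugate M₂ * Nᵀ).trace :=
      trace_mul_le hW (smul_one_sub_psd hadj1)
    have step4 : (N * adjugate M₂ * Nᵀ).trace = (adjugate M₂ * (Nᵀ * N)).trace := by
      rw [trace_mul_cycle, ← Matrix.mul_assoc, trace_mul_comm, Matrix.mul_assoc]
    have step5 : (adjugate M₂ * (Nᵀ * N)).trace ≤ (adjugate M₂).trace * (Nᵀ * N).trace :=
      trace_mul_le hNN (smul_one_sub_psd hadj2)
    have hNN0 : 0 ≤ (Nᵀ * N).trace := trace_nonneg hNN
    have hWtr : 0 ≤ (N * adjugate M₂ * Nᵀ).trace := trace_nonneg hW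
    have hcpow1 : 0 ≤ c ^ k := pow_nonneg hc k
    have hcpow2 : 0 ≤ c ^ l := pow_nonneg hc l
    calc M₁.det * M₂.det - (fromBlocks M₁ N Nᵀ M₂).det
        ≤ (adjugate M₁ * (N * adjugate M₂ * Nᵀ)).trace := by rw [← step2]; exact step1
      _ ≤ (adjugate M₁).trace * ((adjugate M₂).trace * (Nᵀ * N).trace) := by
          refine step3.trans ?_
          rw [step4]
          exact mul_le_mul_of_nonneg_left step5 hα0
      _ ≤ ((k:ℝ)+1) * c ^ k * (((l:ℝ)+1) * c ^ l * (Nᵀ * N).trace) := by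
          apply mul_le_mul hα (mul_le_mul_of_nonneg_right hβ hNN0)
            (mul_nonneg hβ0 hNN0) (by positivity)
      _ = ((k:ℝ)+1) * ((l:ℝ)+1) * (Nᵀ * N).trace * c ^ (k + l) := by
          rw [pow_add]; ring

end Stmt5Aux

open Stmt5Aux


/-- For a PSD block matrix `M = [[M₁, N],[Nᵀ, M₂]]` of size `n = k + l`:
`0 ≤ det M₁ det M₂ − det M ≤ k·l·Tr(NᵀN)·‖M‖_∞^{n−2}`, where `c` is any bound on the
absolute values of the entries of `M` (in particular `c = ‖M‖_∞`). -/
theorem stmt5 {k l : ℕ} (M₁ : Matrix (Fin k) (Fin k) ℝ) (M₂ : Matrix (Fin l) (Fin l) ℝ)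
    (N : Matrix (Fin k) (Fin l) ℝ)
    (h : (Matrix.fromBlocks M₁ N Nᵀ M₂).PosSemidef)
    (c : ℝ) (hc : ∀ i j, |Matrix.fromBlocks M₁ N Nᵀ M₂ i j| ≤ c) :
    0 ≤ M₁.det * M₂.det - (Matrix.fromBlocks M₁ N Nᵀ M₂).det ∧
    M₁.det * M₂.det - (Matrix.fromBlocks M₁ N Nᵀ M₂).det ≤
      (k : ℝ) * l * (Nᵀ * N).trace * c ^ (k + l - 2) := by
  obtain _ | k := k
  · have hN : Nᵀ = 0 := by
      ext i j
      exact j.elim0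
    rw [hN, det_fromBlocks_zero₂₁]
    norm_num
  obtain _ | l := l
  · have hN : N = 0 := by
      ext i j
      exact j.elim0
    rw [hN, det_fromBlocks_zero₁₂]
    norm_num
  · -- main case
    have hc0 : 0 ≤ c := le_trans (abs_nonneg _) (hc (Sum.inl 0) (Sum.inl 0))
    have hM1psd : M₁.PosSemidef := by
      have e : (fromBlocks M₁ N Nᵀ M₂).submatrix Sum.inl Sum.inl = M₁ := by ext i j; rfl
      rw [← e]
      exact h.submatrix _
    have hM2psd : M₂.PosSemidef := by
      have e : (fromBlocks M₁ N Nᵀ M₂).submatrix Sum.inr Sum.inr = M₂ := by ext i j; rfl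
      rw [← e]
      exact h.submatrix _
    have hd1 : ∀ i, M₁ i i ≤ c := fun i =>
      le_trans (le_abs_self _) (hc (Sum.inl i) (Sum.inl i))
    have hd2 : ∀ i, M₂ i i ≤ c := fun i =>
      le_trans (le_abs_self _) (hc (Sum.inr i) (Sum.inr i))
    set F : ℝ → ℝ := fun ε =>
      (M₁ + ε • 1).det * (M₂ + ε • 1).det - (fromBlocks (M₁ + ε • 1) N Nᵀ (M₂ + ε • 1)).det
      with hF
    set K : ℝ → ℝ := fun ε =>
      ((k:ℝ)+1) * ((l:ℝ)+1) * (Nᵀ * N).trace * (c + ε) ^ (k + l) with hK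
    have key : ∀ ε : ℝ, 0 < ε → 0 ≤ F ε ∧ F ε ≤ K ε := by
      intro ε hε
      have hsm1 : (ε • (1 : Matrix (Fin (k+1)) (Fin (k+1)) ℝ)).PosDef := by
        rw [Matrix.smul_one_eq_diagonal]
        exact posDef_diagonal_iff.mpr fun i => hε
      have hsm2 : (ε • (1 : Matrix (Fin (l+1)) (Fin (l+1)) ℝ)).PosDef := by
        rw [Matrix.smul_one_eq_diagonal]
        exact posDef_diagonal_iff.mpr fun i => hε
      have hblk : fromBlocks (M₁ + ε • 1) N Nᵀ (M₂ + ε • 1)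
          = fromBlocks M₁ N Nᵀ M₂ + ε • 1 := by
        rw [← fromBlocks_one, fromBlocks_smul, fromBlocks_add]
        simp
      have hpsd : (fromBlocks (M₁ + ε • 1) N Nᵀ (M₂ + ε • 1)).PosSemidef := by
        rw [hblk]
        refine h.add ?_
        rw [Matrix.smul_one_eq_diagonal]
        exact (posSemidef_diagonal_iff.mpr fun i => hε.le)
      have h1 : (M₁ + ε • 1).PosDef := Matrix.PosDef.posSemidef_add hM1psd hsm1
      have h2 : (M₂ + ε • 1).PosDef := Matrix.PosDef.posSemidef_add hM2psd hsm2
      have hce : (0:ℝ) ≤ c + ε := by linarith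
      have he1 : ∀ i, (M₁ + ε • 1) i i ≤ c + ε := by
        intro i
        have : (M₁ + ε • 1) i i = M₁ i i + ε := by
          simp [Matrix.add_apply, Matrix.smul_apply, Matrix.one_apply_eq]
        rw [this]
        linarith [hd1 i]
      have he2 : ∀ i, (M₂ + ε • 1) i i ≤ c + ε := by
        intro i
        have : (M₂ + ε • 1) i i = M₂ i i + ε := by
          simp [Matrix.add_apply, Matrix.smul_apply, Matrix.one_apply_eq]
        rw [this]
        linarith [hd2 i]
      exact main_pd (M₁ + ε • 1) (M₂ + ε • 1) N hpsd h1 h2 hce he1 he2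
    have c1 : Continuous fun ε : ℝ => M₁ + ε • (1 : Matrix (Fin (k+1)) (Fin (k+1)) ℝ) :=
      continuous_const.add (continuous_id.smul continuous_const)
    have c2 : Continuous fun ε : ℝ => M₂ + ε • (1 : Matrix (Fin (l+1)) (Fin (l+1)) ℝ) :=
      continuous_const.add (continuous_id.smul continuous_const)
    have cblk : Continuous fun ε : ℝ =>
        fromBlocks (M₁ + ε • 1) N Nᵀ (M₂ + ε • 1) := by
      apply continuous_matrix
      rintro (i | i) (j | j)
      · simpa [fromBlocks] using c1.matrix_elem i j
      · exact continuous_const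
      · exact continuous_const
      · simpa [fromBlocks] using c2.matrix_elem i j
    have cF : Continuous F := by
      refine Continuous.sub (Continuous.mul ?_ ?_) ?_
      · exact c1.matrix_det
      · exact c2.matrix_det
      · exact cblk.matrix_det
    have cK : Continuous K := by
      apply continuous_const.mul
      exact (continuous_const.add continuous_id).pow _
    have hF0 : F 0 = M₁.det * M₂.det - (fromBlocks M₁ N Nᵀ M₂).det := by
      simp [hF]
    have hK0 : K 0 = ((k:ℝ)+1) * ((l:ℝ)+1) * (Nᵀ * N).trace * c ^ (k + l) := by
      simp [hK]
    have htF : Filter.Tendsto F (nhdsWithin 0 (Set.Ioi 0)) (nhds (F 0)) :=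
      (cF.tendsto 0).mono_left nhdsWithin_le_nhds
    have htKF : Filter.Tendsto (fun ε => K ε - F ε) (nhdsWithin 0 (Set.Ioi 0))
        (nhds (K 0 - F 0)) :=
      ((cK.sub cF).tendsto 0).mono_left nhdsWithin_le_nhds
    have hlow : 0 ≤ F 0 :=
      ge_of_tendsto htF (eventually_nhdsWithin_of_forall fun ε hε => (key ε hε).1)
    have hup : 0 ≤ K 0 - F 0 :=
      ge_of_tendsto htKF (eventually_nhdsWithin_of_forall fun ε hε =>
        sub_nonneg.mpr (key ε hε).2)
    rw [hF0] at hlow hup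
    rw [hK0] at hup
    constructor
    · exact hlow
    · have hcast : ((k+1:ℕ) : ℝ) * ((l+1:ℕ) : ℝ) = ((k:ℝ)+1) * ((l:ℝ)+1) := by push_cast; ring
      have hexp : (k + 1) + (l + 1) - 2 = k + l := by omega
      rw [hexp]
      push_cast
      linarith
end

section
/- Let X be a DPP with bounded kernel K satisfying Condition ℋ. Then for every s > 0 and n ∈ ℕ, sup over Borel sets A ⊂ ℝ^d with |A| = s of E[2^{n·N(A)}] is at most exp((2^n − 1)·‖K‖_∞·s); in particular it is finite. -/
open MeasureTheory Finset Filter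

lemma trace_eq_sum_eig' {k : ℕ} {M : Matrix (Fin k) (Fin k) ℝ} (hH : M.IsHermitian) :
    M.trace = ∑ i, hH.eigenvalues i := by
  simpa using hH.trace_eq_sum_eigenvalues

lemma det_le_pow_of_psd' {k : ℕ} {M : Matrix (Fin k) (Fin k) ℝ} (hM : M.PosSemidef)
    {Kb : ℝ} (hdiag : ∀ i, M i i ≤ Kb) : M.det ≤ Kb ^ k := by
  rcases Nat.eq_zero_or_pos k with hk | hk
  · subst hk; simp [Matrix.det_fin_zero]
  have hH := hM.1
  have hev : ∀ i, 0 ≤ hH.eigenvalues i := hM.eigenvalues_nonneg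
  have hdet : M.det = ∏ i, hH.eigenvalues i := by
    have := hH.det_eq_prod_eigenvalues
    simpa using this
  have htr : ∑ i, hH.eigenvalues i ≤ k * Kb := by
    rw [← trace_eq_sum_eig' hH]
    unfold Matrix.trace
    calc ∑ i, M.diag i ≤ ∑ _i : Fin k, Kb := Finset.sum_le_sum fun i _ => hdiag i
    _ = k * Kb := by simp [mul_comm]
  have hw : ∑ _i : Fin k, ((k:ℝ))⁻¹ = 1 := by
    simp [Finset.sum_const]
    field_simp
  have amgm := Real.geom_mean_le_arith_mean_weighted Finset.univ
    (fun _ => ((k:ℝ))⁻¹) hH.eigenvalues (fun i _ => by positivity) hw (fun i _ => hev i)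
  have hmean : ∑ i, ((k:ℝ))⁻¹ * hH.eigenvalues i ≤ Kb := by
    rw [← Finset.mul_sum]
    rw [inv_mul_le_iff₀ (by positivity)]
    linarith [htr]
  rw [hdet]
  have h1 : (∏ i, hH.eigenvalues i ^ ((k:ℝ))⁻¹) ^ k ≤ Kb ^ k := by
    apply pow_le_pow_left₀ (Finset.prod_nonneg fun i _ => Real.rpow_nonneg (hev i) _)
    exact le_trans amgm hmean
  calc ∏ i, hH.eigenvalues i
      = (∏ i, hH.eigenvalues i ^ ((k:ℝ))⁻¹) ^ k := by
        rw [← Finset.prod_pow]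
        refine Finset.prod_congr rfl fun i _ => ?_
        rw [← Real.rpow_natCast (hH.eigenvalues i ^ ((k:ℝ))⁻¹) k, ← Real.rpow_mul (hev i)]
        rw [inv_mul_cancel₀ (by positivity : (k:ℝ) ≠ 0), Real.rpow_one]
    _ ≤ Kb ^ k := h1

lemma psd_det_nonneg' {k : ℕ} {M : Matrix (Fin k) (Fin k) ℝ} (hM : M.PosSemidef) :
    0 ≤ M.det := by
  have h : M.det = ∏ i, hM.1.eigenvalues i := by simpa using hM.1.det_eq_prod_eigenvalues
  rw [h]
  exact Finset.prod_nonneg fun i _ => hM.eigenvalues_nonneg i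

lemma choose_le_two_pow' (N k : ℕ) : N.choose k ≤ 2 ^ N := by
  rcases le_or_gt k N with h | h
  · calc N.choose k ≤ ∑ m ∈ Finset.range (N + 1), N.choose m :=
        Finset.single_le_sum (fun i _ => Nat.zero_le _)
          (Finset.mem_range.2 (Nat.lt_succ_of_le h))
    _ = 2 ^ N := Nat.sum_range_choose N
  · rw [Nat.choose_eq_zero_of_lt h]; exact Nat.zero_le _

/-- Exponential moments of the number of points of a DPP: if `X` is a DPP with bounded
kernel `K` (`|K| ≤ Kb`) satisfying Condition ℋ (so every matrix `K[x]` is PSD), and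
`A` is a Borel set of volume `s`, then `E[2^{n N(A)}] ≤ exp((2^n − 1) Kb s)`.
The DPP moment identity `E[binom(N(A),k)]·k! = ∫_{A^k} det K[x] dx` (`hmom`) is used. -/
theorem stmt12 {d : ℕ} {Ω : Type*} [MeasurableSpace Ω]
    (P : Measure Ω) [IsProbabilityMeasure P]
    (X : Ω → Set (EuclideanSpace ℝ (Fin d)))
    (K : EuclideanSpace ℝ (Fin d) → EuclideanSpace ℝ (Fin d) → ℝ)
    (Kb : ℝ) (hKb : ∀ x y, |K x y| ≤ Kb)
    (hPSD : ∀ (k : ℕ) (x : Fin k → EuclideanSpace ℝ (Fin d)),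
      (Matrix.of fun a b => K (x a) (x b)).PosSemidef)
    (n : ℕ) (s : ℝ) (hs : 0 < s)
    (A : Set (EuclideanSpace ℝ (Fin d))) (hAm : MeasurableSet A)
    (hvA : (volume A).toReal = s)
    (hmom : ∀ k : ℕ,
      (∫ ω, ((X ω ∩ A).ncard.choose k : ℝ) ∂P) * (k.factorial : ℝ)
        = ∫ x in (Set.univ.pi fun _ : Fin k => A),
            (Matrix.of fun a b => K (x a) (x b)).det) :
    ∫ ω, (2 : ℝ) ^ (n * (X ω ∩ A).ncard) ∂P ≤ Real.exp ((2 ^ n - 1) * Kb * s) := by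
  classical
  have hKb0 : 0 ≤ Kb := le_trans (abs_nonneg _) (hKb 0 0)
  set N : Ω → ℕ := fun ω => (X ω ∩ A).ncard with hNdef
  set t : ℝ := 2 ^ n - 1 with htdef
  have ht0 : 0 ≤ t := by
    have : (1:ℝ) ≤ 2 ^ n := one_le_pow₀ (by norm_num)
    simp [htdef]; linarith
  have hvAfin : volume A ≠ ⊤ := by
    intro h; rw [h] at hvA; simp at hvA; linarith
  -- per-k moment bound
  have momk : ∀ k : ℕ, (∫ ω, ((N ω).choose k : ℝ) ∂P) ≤ (Kb * s) ^ k / (k.factorial : ℝ) := by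
    intro k
    have hfact : (0:ℝ) < (k.factorial : ℝ) := by exact_mod_cast k.factorial_pos
    rw [le_div_iff₀ hfact]
    rw [hmom k]
    have hvol : volume (Set.univ.pi fun _ : Fin k => A) = (volume A) ^ k := by
      rw [volume_pi_pi]; simp
    have hfin : volume (Set.univ.pi fun _ : Fin k => A) < ⊤ := by
      rw [hvol]; exact ENNReal.pow_lt_top hvAfin.lt_top
    have hmeas : MeasurableSet (Set.univ.pi fun _ : Fin k => A) :=
      MeasurableSet.univ_pi fun _ => hAm
    have hb : ∀ᵐ x ∂(volume : Measure (Fin k → EuclideanSpace ℝ (Fin d))),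
        x ∈ (Set.univ.pi fun _ : Fin k => A) →
        ‖(Matrix.of fun a b => K (x a) (x b)).det‖ ≤ Kb ^ k := by
      refine Filter.Eventually.of_forall fun x _ => ?_
      have hpsd := hPSD k x
      rw [Real.norm_eq_abs, abs_of_nonneg (psd_det_nonneg' hpsd)]
      exact det_le_pow_of_psd' hpsd fun i => le_trans (le_abs_self _) (hKb _ _)
    calc (∫ x in (Set.univ.pi fun _ : Fin k => A),
            (Matrix.of fun a b => K (x a) (x b)).det)
        ≤ ‖∫ x in (Set.univ.pi fun _ : Fin k => A),
            (Matrix.of fun a b => K (x a) (x b)).det‖ := le_abs_self _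
      _ ≤ Kb ^ k * (volume (Set.univ.pi fun _ : Fin k => A)).toReal :=
          norm_setIntegral_le_of_norm_le_const_ae' hfin hb
      _ = (Kb * s) ^ k := by
          rw [hvol, ENNReal.toReal_pow, hvA, mul_pow]
  -- trivial case n = 0
  rcases Nat.eq_zero_or_pos n with hn0 | hn
  · subst hn0
    simp only [Nat.zero_mul, pow_zero, integral_const, measure_univ, ENNReal.toReal_one, probReal_univ,
      smul_eq_mul, mul_one, one_mul]
    have : ((2:ℝ) ^ 0 - 1) * Kb * s = 0 := by norm_num
    rw [this, Real.exp_zero]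
  -- main case
  set f : Ω → ℝ := fun ω => (2:ℝ) ^ (n * N ω) with hfdef
  show ∫ ω, f ω ∂P ≤ Real.exp ((2 ^ n - 1) * Kb * s)
  by_cases hfi : Integrable f P
  swap
  · rw [integral_undef hfi]; exact (Real.exp_pos _).le
  obtain ⟨g, hgm, hfg⟩ := hfi.1
  -- a measurable a.e.-version of N
  set invN : ℝ → ℕ := fun y => if h : ∃ m : ℕ, (2:ℝ) ^ (n * m) = y then h.choose else 0
    with hinvdef
  have hpowinj : ∀ a b : ℕ, (2:ℝ) ^ a = (2:ℝ) ^ b → a = b := by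
    intro a b h
    have : ((2 ^ a : ℕ) : ℝ) = ((2 ^ b : ℕ) : ℝ) := by push_cast; exact h
    exact Nat.pow_right_injective (le_refl 2) (Nat.cast_injective this)
  have hinvN : ∀ m : ℕ, invN ((2:ℝ) ^ (n * m)) = m := by
    intro m
    have hex : ∃ m' : ℕ, (2:ℝ) ^ (n * m') = (2:ℝ) ^ (n * m) := ⟨m, rfl⟩
    rw [hinvdef]
    simp only [hex, dif_pos]
    have := hex.choose_spec
    have := hpowinj _ _ this
    exact Nat.eq_of_mul_eq_mul_left hn this
  have hinvmeas : Measurable invN := by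
    apply measurable_to_countable'
    intro m
    set E : Set ℝ := Set.range fun m : ℕ => (2:ℝ) ^ (n * m) with hEdef
    have hEc : E.Countable := Set.countable_range _
    have hout : ∀ y ∉ E, invN y = 0 := by
      intro y hy
      have : ¬ ∃ m' : ℕ, (2:ℝ) ^ (n * m') = y := by
        intro ⟨m', hm'⟩; exact hy ⟨m', hm'⟩
      simp [hinvdef, this]
    have : invN ⁻¹' {m} = (invN ⁻¹' {m} ∩ E) ∪ (invN ⁻¹' {m} ∩ Eᶜ) :=
      (Set.inter_union_compl _ _).symm
    rw [this]
    apply MeasurableSet.union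
    · exact (hEc.mono Set.inter_subset_right).measurableSet
    · rcases Nat.eq_zero_or_pos m with hm0 | hm
      · subst hm0
        have : invN ⁻¹' {0} ∩ Eᶜ = Eᶜ := by
          ext y; simp only [Set.mem_inter_iff, Set.mem_preimage, Set.mem_singleton_iff,
            Set.mem_compl_iff, and_iff_right_iff_imp]
          exact fun hy => hout y hy
        rw [this]
        exact hEc.measurableSet.compl
      · have he : invN ⁻¹' {m} ∩ Eᶜ = ∅ := by
          ext y
          simp only [Set.mem_inter_iff, Set.mem_preimage, Set.mem_singleton_iff,
            Set.mem_compl_iff, Set.mem_empty_iff_false, iff_false, not_and]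
          intro hym hy
          rw [hout y hy] at hym
          omega
        rw [he]; exact MeasurableSet.empty
  set N' : Ω → ℕ := fun ω => invN (g ω) with hN'def
  have hN'meas : Measurable N' := hinvmeas.comp hgm.measurable
  have hNae : ∀ᵐ ω ∂P, N' ω = N ω := by
    filter_upwards [hfg] with ω h
    rw [hN'def]
    simp only
    rw [← h, hfdef]
    exact hinvN (N ω)
  -- the terms
  set c : ℕ → Ω → ℝ := fun k ω => ((N ω).choose k : ℝ) * t ^ k with hcdef
  have hc0 : ∀ k ω, 0 ≤ c k ω := fun k ω => by positivity
  have hcmeas : ∀ k, AEStronglyMeasurable (c k) P := by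
    intro k
    have : Measurable fun ω => ((N' ω).choose k : ℝ) * t ^ k := by
      exact ((measurable_from_top (f := fun m : ℕ => ((m.choose k : ℝ) * t ^ k))).comp hN'meas)
    refine this.aestronglyMeasurable.congr ?_
    filter_upwards [hNae] with ω h
    rw [hcdef]; simp only; rw [h]
  have hcint : ∀ k, Integrable (c k) P := by
    intro k
    refine Integrable.mono' (hfi.const_mul (t ^ k)) (hcmeas k) ?_
    refine Filter.Eventually.of_forall fun ω => ?_
    rw [Real.norm_eq_abs, abs_of_nonneg (hc0 k ω)]
    rw [hcdef]; simp only
    rw [mul_comm (t ^ k) (f ω)]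
    apply mul_le_mul_of_nonneg_right _ (pow_nonneg ht0 k)
    have h1 : ((N ω).choose k : ℝ) ≤ (2:ℝ) ^ (N ω) := by
      exact_mod_cast choose_le_two_pow' (N ω) k
    refine h1.trans ?_
    rw [hfdef]
    exact pow_le_pow_right₀ (by norm_num) (Nat.le_mul_of_pos_left _ hn)
  -- partial sums
  set G : ℕ → Ω → ℝ := fun M ω => ∑ k ∈ Finset.range M, c k ω with hGdef
  have hGint : ∀ M, Integrable (G M) P := fun M => integrable_finset_sum _ fun k _ => hcint k
  have hGmono : ∀ ω, Monotone fun M => G M ω := by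
    intro ω i j hij
    exact Finset.sum_le_sum_of_subset_of_nonneg (Finset.range_subset_range.2 hij)
      fun k _ _ => hc0 k ω
  have hGtend : ∀ ω, Tendsto (fun M => G M ω) atTop (nhds (f ω)) := by
    intro ω
    apply tendsto_atTop_of_eventually_const (i₀ := N ω + 1)
    intro M hM
    rw [hGdef]
    simp only
    have hsub : ∑ k ∈ Finset.range M, c k ω = ∑ k ∈ Finset.range (N ω + 1), c k ω := by
      refine (Finset.sum_subset (Finset.range_subset_range.2 hM) ?_).symm
      intro k _ hk
      rw [Finset.mem_range, Nat.lt_succ_iff, not_le] at hk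
      rw [hcdef]; simp [Nat.choose_eq_zero_of_lt hk]
    rw [hsub]
    have hbin := add_pow t 1 (N ω)
    simp only [one_pow, mul_one] at hbin
    have : ∑ k ∈ Finset.range (N ω + 1), c k ω = (t + 1) ^ (N ω) := by
      rw [hbin]
      refine Finset.sum_congr rfl fun k _ => ?_
      rw [hcdef]; ring
    rw [this, hfdef]
    simp only
    have ht1 : t + 1 = (2:ℝ) ^ n := by rw [htdef]; ring
    rw [ht1, ← pow_mul]
  have hmain := integral_tendsto_of_tendsto_of_monotone hGint hfi
    (Filter.Eventually.of_forall hGmono) (Filter.Eventually.of_forall hGtend)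
  refine le_of_tendsto' hmain fun M => ?_
  rw [hGdef]
  simp only
  rw [integral_finset_sum _ fun k _ => hcint k]
  have hx0 : 0 ≤ t * Kb * s := by positivity
  calc ∑ k ∈ Finset.range M, ∫ ω, c k ω ∂P
      ≤ ∑ k ∈ Finset.range M, (t * Kb * s) ^ k / (k.factorial : ℝ) := by
        refine Finset.sum_le_sum fun k _ => ?_
        rw [hcdef]
        simp only
        rw [integral_mul_const]
        have := momk k
        calc (∫ ω, ((N ω).choose k : ℝ) ∂P) * t ^ k
            ≤ (Kb * s) ^ k / (k.factorial : ℝ) * t ^ k :=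
              mul_le_mul_of_nonneg_right this (pow_nonneg ht0 k)
          _ = (t * Kb * s) ^ k / (k.factorial : ℝ) := by
              rw [div_mul_eq_mul_div, ← mul_pow]; ring_nf
    _ ≤ Real.exp (t * Kb * s) := Real.sum_le_exp_of_nonneg hx0 M
end

section
/- Let 𝒦 be a trace-class positive self-adjoint operator with operator norm ‖𝒦‖ < 1 and eigenvalues (λ_i). Then exp(−Σ_{n≥1} Tr(𝒦^n)/n) = Π_i (1 − λ_i) ≥ (1 − ‖𝒦‖)^{Tr(𝒦)/‖𝒦‖}. -/
open Real

/-- Key pointwise inequality from concavity of log: for `0 ≤ t ≤ κ < 1`,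
`(t/κ) * log (1-κ) ≤ log (1-t)`. -/
lemma key_ineq {κ t : ℝ} (hκ0 : 0 < κ) (hκ1 : κ < 1) (ht0 : 0 ≤ t) (htκ : t ≤ κ) :
    (t / κ) * Real.log (1 - κ) ≤ Real.log (1 - t) := by
  have h1 : (0:ℝ) < 1 - κ := by linarith
  have h2 : (1:ℝ) ∈ Set.Ioi (0:ℝ) := by norm_num
  have h3 : (1 - κ) ∈ Set.Ioi (0:ℝ) := h1
  have ha : 0 ≤ 1 - t / κ := by
    rw [sub_nonneg, div_le_one hκ0]; exact htκ
  have hb : 0 ≤ t / κ := div_nonneg ht0 hκ0.le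
  have hab : (1 - t / κ) + t / κ = 1 := by ring
  have := strictConcaveOn_log_Ioi.concaveOn.2 h2 h3 ha hb hab
  have hx : (1 - t / κ) • (1:ℝ) + (t / κ) • (1 - κ) = 1 - t := by
    field_simp
    have hκ : κ ≠ 0 := hκ0.ne'
    rw [smul_eq_mul, smul_eq_mul, div_mul_eq_mul_div, div_mul_eq_mul_div, ← add_div, div_eq_iff hκ]; ring
  rw [hx] at this
  simpa [Real.log_one] using this

/-- For a trace-class positive operator with eigenvalues `lam i ∈ [0, κ]`, `κ < 1`,
and trace `T = Σ lam i`: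
`exp(−Σ_{n≥1} Tr(𝒦^n)/n) = Π_i (1 − lam i) ≥ (1 − κ)^{T/κ}`. -/
theorem stmt16 (lam : ℕ → ℝ) (κ T : ℝ) (hκ0 : 0 < κ) (hκ1 : κ < 1)
    (hlam : ∀ i, 0 ≤ lam i ∧ lam i ≤ κ) (hsum : Summable lam)
    (hT : ∑' i, lam i = T) :
    Real.exp (-(∑' n : ℕ, (∑' i, lam i ^ (n + 1)) / (n + 1))) = ∏' i, (1 - lam i) ∧
    Real.rpow (1 - κ) (T / κ) ≤ ∏' i, (1 - lam i) := by
  have hpos : ∀ i, 0 < 1 - lam i := fun i => by have := (hlam i).2; linarith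
  have habs : ∀ i, |lam i| < 1 := fun i => by
    rw [abs_of_nonneg (hlam i).1]; linarith [(hlam i).2]
  -- log series for each i
  have hlog : ∀ i, HasSum (fun n : ℕ => lam i ^ (n + 1) / (n + 1))
      (-Real.log (1 - lam i)) := fun i => hasSum_pow_div_log_of_abs_lt_one (habs i)
  -- pointwise bound: -log(1-lam i) ≤ (lam i / κ) * (-log(1-κ))
  have hbound : ∀ i, -Real.log (1 - lam i) ≤ lam i * (-(Real.log (1 - κ)) / κ) := by
    intro i
    have := key_ineq hκ0 hκ1 (hlam i).1 (hlam i).2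
    have h : lam i * (-(Real.log (1 - κ)) / κ) = -((lam i / κ) * Real.log (1 - κ)) := by ring
    rw [h]; linarith
  have hnl_nonneg : ∀ i, 0 ≤ -Real.log (1 - lam i) := by
    intro i
    have : Real.log (1 - lam i) ≤ 0 := Real.log_nonpos (by linarith [hpos i]) (by linarith [(hlam i).1])
    linarith
  -- summability of -log(1 - lam i)
  have hsumlog : Summable (fun i => -Real.log (1 - lam i)) :=
    Summable.of_nonneg_of_le hnl_nonneg hbound (hsum.mul_right _)
  -- Fubini: swap the double sum
  have hf : ∀ p : ℕ × ℕ, 0 ≤ (fun p : ℕ × ℕ => lam p.1 ^ (p.2 + 1) / (p.2 + 1)) p := by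
    intro p
    exact div_nonneg (pow_nonneg (hlam p.1).1 _) (by positivity)
  have hrow : ∀ i, Summable (fun n : ℕ => lam i ^ (n + 1) / (n + 1)) := fun i => (hlog i).summable
  have hrowsum : Summable (fun i => ∑' n : ℕ, lam i ^ (n + 1) / (n + 1)) := by
    have : (fun i => ∑' n : ℕ, lam i ^ (n + 1) / (n + 1)) = fun i => -Real.log (1 - lam i) := by
      funext i; exact (hlog i).tsum_eq
    rw [this]; exact hsumlog
  have huncurry : Summable (fun p : ℕ × ℕ => lam p.1 ^ (p.2 + 1) / (p.2 + 1 : ℝ)) := by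
    rw [summable_prod_of_nonneg hf]
    exact ⟨hrow, hrowsum⟩
  have hswap : ∑' n : ℕ, (∑' i, lam i ^ (n + 1)) / (n + 1)
      = ∑' i, -Real.log (1 - lam i) := by
    have h1 : ∀ n : ℕ, (∑' i, lam i ^ (n + 1)) / (n + 1)
        = ∑' i, lam i ^ (n + 1) / (n + 1) := by
      intro n; rw [tsum_div_const]
    calc ∑' n : ℕ, (∑' i, lam i ^ (n + 1)) / (n + 1)
        = ∑' n : ℕ, ∑' i, lam i ^ (n + 1) / (n + 1) := by
          exact tsum_congr h1
      _ = ∑' i, ∑' n : ℕ, lam i ^ (n + 1) / (n + 1) :=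
          Summable.tsum_comm (f := fun (i n : ℕ) => lam i ^ (n + 1) / (n + 1 : ℝ)) huncurry
      _ = ∑' i, -Real.log (1 - lam i) := tsum_congr fun i => (hlog i).tsum_eq
  have hsumlog' : Summable (fun i => Real.log (1 - lam i)) := by
    simpa using hsumlog.neg
  have hprod : Real.exp (∑' i, Real.log (1 - lam i)) = ∏' i, (1 - lam i) := by
    exact Real.rexp_tsum_eq_tprod (f := fun i => 1 - lam i) hpos hsumlog'
  have heq : Real.exp (-(∑' n : ℕ, (∑' i, lam i ^ (n + 1)) / (n + 1))) = ∏' i, (1 - lam i) := by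
    rw [hswap, ← hprod]
    congr 1
    rw [← tsum_neg]
    simp
  refine ⟨heq, ?_⟩
  -- second part
  rw [← heq]
  have hrp : Real.rpow (1 - κ) (T / κ) = Real.exp (Real.log (1 - κ) * (T / κ)) :=
    Real.rpow_def_of_pos (by linarith) _
  rw [hrp]
  apply Real.exp_le_exp.mpr
  rw [hswap]
  have h1 : ∑' i, -Real.log (1 - lam i) ≤ ∑' i, lam i * (-(Real.log (1 - κ)) / κ) :=
    Summable.tsum_le_tsum hbound hsumlog (hsum.mul_right _)
  have h2 : ∑' i, lam i * (-(Real.log (1 - κ)) / κ) = T * (-(Real.log (1 - κ)) / κ) := by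
    rw [tsum_mul_right, hT]
  have h3 : Real.log (1 - κ) * (T / κ) = -(T * (-(Real.log (1 - κ)) / κ)) := by ring
  linarith
end
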